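/- Let n > 2k > 0, F ⊆ {S ⊆ [n] : |S| = k} intersecting, with F_i, G, H₁, H₂ as defined (F_i = members meeting [3] exactly in {i}; G = traces on [4,n] of members meeting [3] exactly in {2,3}; H₁ = traces of F₁; H₂ = members disjoint from [3]). If |F₁| ≥ |F₂| and |F₁| ≥ |F₃|, then γ(F) ≤ |G| + 2|H₁| + |H₂|. -/

import Mathlib

open Finset

lemma recon {n : ℕ} {S : Finset ℕ} (hS : S ⊆ Icc 1 n) :
    S = S ∩ ({1, 2, 3} : Finset ℕ) ∪ S ∩ Icc 4 n := by
  ext x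
  simp only [mem_union, mem_inter, mem_insert, mem_singleton, mem_Icc]
  constructor
  · intro hx
    have h := hS hx
    simp only [mem_Icc] at h
    by_cases h3 : x ≤ 3
    · exact Or.inl ⟨hx, by omega⟩
    · exact Or.inr ⟨hx, by omega, h.2⟩
  · rintro (⟨h, _⟩ | ⟨h, _⟩) <;> exact h

lemma inj_trace {n : ℕ} {F : Finset (Finset ℕ)} (hsub : ∀ S ∈ F, S ⊆ Icc 1 n)
    (T : Finset ℕ) :
    (F.filter (fun S => S ∩ ({1, 2, 3} : Finset ℕ) = T)).card =
      ((F.filter (fun S => S ∩ ({1, 2, 3} : Finset ℕ) = T)).image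
        (fun S => S ∩ Icc 4 n)).card := by
  rw [card_image_of_injOn]
  intro S hS S' hS' h
  simp only [mem_coe, mem_filter] at hS hS'
  simp only at h
  rw [recon (hsub S hS.1), recon (hsub S' hS'.1), hS.2, hS'.2, h]

theorem diversity_le_G_H1_H2 (n k : ℕ) (hk : 0 < k) (hn : 2 * k < n)
    (F : Finset (Finset ℕ)) (hF : F ⊆ (Icc 1 n).powersetCard k)
    (hint : ∀ A ∈ F, ∀ B ∈ F, (A ∩ B).Nonempty)
    (h12 : (F.filter (fun S => S ∩ ({1, 2, 3} : Finset ℕ) = {2})).card ≤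
      (F.filter (fun S => S ∩ ({1, 2, 3} : Finset ℕ) = {1})).card)
    (h13 : (F.filter (fun S => S ∩ ({1, 2, 3} : Finset ℕ) = {3})).card ≤
      (F.filter (fun S => S ∩ ({1, 2, 3} : Finset ℕ) = {1})).card) :
    F.card - (Icc 1 n).sup (fun i => (F.filter (fun A => i ∈ A)).card) ≤
      ((F.filter (fun S => S ∩ ({1, 2, 3} : Finset ℕ) = {2, 3})).image
        (fun S => S ∩ Icc 4 n)).card
      + 2 * ((F.filter (fun S => S ∩ ({1, 2, 3} : Finset ℕ) = {1})).image
          (fun S => S ∩ Icc 4 n)).card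
      + (F.filter (fun S => S ⊆ Icc 4 n)).card := by
  classical
  have hsub : ∀ S ∈ F, S ⊆ Icc 1 n := fun S hS => (mem_powersetCard.1 (hF hS)).1
  have hn1 : (1:ℕ) ∈ Icc 1 n := by simp [mem_Icc]; omega
  have hsup : (F.filter (fun A => (1:ℕ) ∈ A)).card ≤
      (Icc 1 n).sup (fun i => (F.filter (fun A => i ∈ A)).card) :=
    le_sup (f := fun i => (F.filter (fun A => i ∈ A)).card) hn1
  have hstep1 : F.card - (Icc 1 n).sup (fun i => (F.filter (fun A => i ∈ A)).card)
      ≤ (F.filter (fun S => (1:ℕ) ∉ S)).card := by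
    have := F.card_filter_add_card_filter_not (p := fun A => (1:ℕ) ∈ A)
    omega
  set A := F.filter (fun S => S ∩ ({1, 2, 3} : Finset ℕ) = {2, 3}) with hA
  set B := F.filter (fun S => S ∩ ({1, 2, 3} : Finset ℕ) = {2}) with hB
  set C := F.filter (fun S => S ∩ ({1, 2, 3} : Finset ℕ) = {3}) with hC
  set D := F.filter (fun S => S ⊆ Icc 4 n) with hD
  have hdecomp : F.filter (fun S => (1:ℕ) ∉ S) ⊆ A ∪ B ∪ C ∪ D := by
    intro S hS
    simp only [mem_filter] at hS
    obtain ⟨hSF, h1⟩ := hS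
    simp only [hA, hB, hC, hD, mem_union, mem_filter]
    by_cases h2 : 2 ∈ S <;> by_cases h3 : 3 ∈ S
    · refine Or.inl <| Or.inl <| Or.inl ⟨hSF, ?_⟩
      ext x
      simp only [mem_inter, mem_insert, mem_singleton]
      constructor
      · rintro ⟨hx, rfl | rfl | rfl⟩
        · exact absurd hx h1
        · exact Or.inl rfl
        · exact Or.inr rfl
      · rintro (rfl | rfl)
        · exact ⟨h2, Or.inr (Or.inl rfl)⟩
        · exact ⟨h3, Or.inr (Or.inr rfl)⟩
    · refine Or.inl <| Or.inl <| Or.inr ⟨hSF, ?_⟩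
      ext x
      simp only [mem_inter, mem_insert, mem_singleton]
      constructor
      · rintro ⟨hx, rfl | rfl | rfl⟩
        · exact absurd hx h1
        · rfl
        · exact absurd hx h3
      · rintro rfl; exact ⟨h2, Or.inr (Or.inl rfl)⟩
    · refine Or.inl <| Or.inr ⟨hSF, ?_⟩
      ext x
      simp only [mem_inter, mem_insert, mem_singleton]
      constructor
      · rintro ⟨hx, rfl | rfl | rfl⟩
        · exact absurd hx h1
        · exact absurd hx h2
        · rfl
      · rintro rfl; exact ⟨h3, Or.inr (Or.inr rfl)⟩
    · refine Or.inr ⟨hSF, fun x hx => ?_⟩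
      have hxI := hsub S hSF hx
      simp only [mem_Icc] at hxI ⊢
      have hx1 : x ≠ 1 := fun h => h1 (h ▸ hx)
      have hx2 : x ≠ 2 := fun h => h2 (h ▸ hx)
      have hx3 : x ≠ 3 := fun h => h3 (h ▸ hx)
      omega
  have hcard : (F.filter (fun S => (1:ℕ) ∉ S)).card ≤
      A.card + B.card + C.card + D.card := by
    calc (F.filter (fun S => (1:ℕ) ∉ S)).card ≤ (A ∪ B ∪ C ∪ D).card :=
          card_le_card hdecomp
      _ ≤ (A ∪ B ∪ C).card + D.card := card_union_le _ _
      _ ≤ (A ∪ B).card + C.card + D.card := by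
          have := card_union_le (A ∪ B) C; omega
      _ ≤ A.card + B.card + C.card + D.card := by
          have := card_union_le A B; omega
  have hAeq := inj_trace hsub (F := F) ({2, 3} : Finset ℕ)
  have h1eq := inj_trace hsub (F := F) ({1} : Finset ℕ)
  calc F.card - (Icc 1 n).sup (fun i => (F.filter (fun A => i ∈ A)).card)
      ≤ (F.filter (fun S => (1:ℕ) ∉ S)).card := hstep1
    _ ≤ A.card + B.card + C.card + D.card := hcard
    _ ≤ _ := by
        rw [← hAeq, ← h1eq, ← hA]
        omega
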